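/- Suppose C is both left primary decomposable and right primary decomposable. Then for every irreducible λ of R the natural map C_λ/Δ → C/C^λ is an isomorphism; concretely: (a) every c ∈ C_λ ∩ C^λ lies in Δ, and (b) for every c ∈ C there exists d ∈ C_λ with c − d ∈ C^λ. -/

import Mathlib

open Classical in
/-- `S(λ)`: `λ` itself if `λ` is an associate of its involutive image `λ*`,
and `λ · λ*` otherwise. -/
noncomputable def Sdual {R : Type*} [CommRing R] (σ : R →+* R) (l : R) : R :=
  if Associated l (σ l) then l else l * σ l

/-- `λ` and `μ` are `*`-associates: `λ` is an associate of `μ` or of `μ* = σ μ`. -/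
def StarAssoc {R : Type*} [CommRing R] (σ : R →+* R) (l m : R) : Prop :=
  Associated l m ∨ Associated l (σ m)

/-- The subset `Δ ⊆ C` of classes of elements whose `χ`-value is a unit. -/
def DeltaSet {K C R : Type*} [AddCommMonoid K] [AddCommGroup C] [CommRing R]
    (π : K →+ C) (χ : K → R) : Set C :=
  {c | ∃ k, π k = c ∧ IsUnit (χ k)}

/-- The `λ`-primary part `C_λ ⊆ C`: classes of elements whose `χ`-value is an
associate of a power of `S(λ)`. -/
def Cprim {K C R : Type*} [AddCommMonoid K] [AddCommGroup C] [CommRing R]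
    (σ : R →+* R) (π : K →+ C) (χ : K → R) (l : R) : Set C :=
  {c | ∃ k, π k = c ∧ ∃ n : ℕ, Associated (χ k) (Sdual σ l ^ n)}

/-- The coprimary part `C^λ ⊆ C`: classes of elements whose `χ`-value is not
divisible by `λ`. -/
def Cco {K C R : Type*} [AddCommMonoid K] [AddCommGroup C] [CommRing R]
    (π : K →+ C) (χ : K → R) (l : R) : Set C :=
  {c | ∃ k, π k = c ∧ ¬ l ∣ χ k}

/-- Left primary decomposability of a subgroup with carrier `S` of an abelian group `G`,
with respect to a designated subset `D` ("`Δ`") and primary parts `P λ`: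
every element of `S` is `D` plus a finite sum of primary elements, and a sum of
primary elements along pairwise non-`*`-associate irreducibles lying in `D` has all
summands in `D`. -/
def LeftPD {R G : Type*} [CommRing R] [AddCommGroup G] (σ : R →+* R)
    (S D : Set G) (P : R → Set G) : Prop :=
  (∀ g ∈ S, ∃ d ∈ D, ∃ n : ℕ, ∃ lam : Fin n → R, ∃ cs : Fin n → G,
    (∀ i, Irreducible (lam i)) ∧ (∀ i, cs i ∈ P (lam i)) ∧ g = d + ∑ i, cs i) ∧
  (∀ (n : ℕ) (lam : Fin n → R) (cs : Fin n → G),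
    (∀ i, Irreducible (lam i)) →
    (∀ i j, i ≠ j → ¬ StarAssoc σ (lam i) (lam j)) →
    (∀ i, cs i ∈ P (lam i)) →
    (∑ i, cs i) ∈ D → ∀ i, cs i ∈ D)

/-- Right primary decomposability of a subgroup with carrier `S` of an abelian group `G`,
with respect to a designated subset `D` ("`Δ`") and coprimary parts `Q λ`:
an element of `S` lying in every `Q λ` lies in `D`, and for every `g ∈ S` and
irreducible `λ` there is `d ∈ S` with `g - d ∈ Q λ` and `d ∈ Q μ` for every
irreducible `μ` not `*`-associate to `λ`. -/
def RightPD {R G : Type*} [CommRing R] [AddCommGroup G] (σ : R →+* R)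
    (S D : Set G) (Q : R → Set G) : Prop :=
  (∀ g ∈ S, (∀ l : R, Irreducible l → g ∈ Q l) → g ∈ D) ∧
  (∀ g ∈ S, ∀ l : R, Irreducible l → ∃ d ∈ S, g - d ∈ Q l ∧
    ∀ μ : R, Irreducible μ → ¬ StarAssoc σ l μ → d ∈ Q μ)

private lemma sigma_assoc {R : Type*} [CommRing R] (σ : R →+* R) (hσ : ∀ r, σ (σ r) = r)
    {a b : R} (h : Associated a b) : Associated (σ a) (σ b) :=
  Associated.map (RingEquiv.ofRingHom σ σ (by ext r; exact hσ r)
    (by ext r; exact hσ r)).toMulEquiv.toMonoidHom h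

private lemma sigma_irr {R : Type*} [CommRing R] (σ : R →+* R) (hσ : ∀ r, σ (σ r) = r)
    {a : R} (h : Irreducible a) : Irreducible (σ a) :=
  (MulEquiv.irreducible_iff (RingEquiv.ofRingHom σ σ (by ext r; exact hσ r)
    (by ext r; exact hσ r)).toMulEquiv).mpr h

private lemma sdual_assoc {R : Type*} [CommRing R] (σ : R →+* R) (hσ : ∀ r, σ (σ r) = r)
    {m l : R} (h : StarAssoc σ m l) : Associated (Sdual σ m) (Sdual σ l) := by
  have sA : ∀ {a b : R}, Associated a b → Associated (σ a) (σ b) :=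
    fun hab => sigma_assoc σ hσ hab
  rcases h with h1 | h1
  · by_cases hl' : Associated l (σ l)
    · have hm' : Associated m (σ m) := h1.trans (hl'.trans (sA h1.symm))
      unfold Sdual
      rw [if_pos hl', if_pos hm']
      exact h1
    · have hm' : ¬ Associated m (σ m) := fun hm =>
        hl' (h1.symm.trans (hm.trans (sA h1)))
      unfold Sdual
      rw [if_neg hl', if_neg hm']
      exact h1.mul_mul (sA h1)
  · -- Associated m (σ l)
    have h2 : Associated (σ m) l := by
      have := sA h1
      rwa [hσ l] at this
    by_cases hl' : Associated l (σ l)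
    · have hml : Associated m l := h1.trans hl'.symm
      have hm' : Associated m (σ m) := hml.trans (hl'.trans (sA hml.symm))
      unfold Sdual
      rw [if_pos hl', if_pos hm']
      exact hml
    · have hm' : ¬ Associated m (σ m) := fun hm =>
        hl' (h2.symm.trans (hm.symm.trans h1))
      unfold Sdual
      rw [if_neg hl', if_neg hm']
      exact mul_comm (σ l) l ▸ (h1.mul_mul h2)

/-- If `C` is both left and right primary decomposable, then for every irreducible `λ`
the natural map `C_λ/Δ → C/C^λ` is an isomorphism: (a) injectivity (every element of
`C_λ ∩ C^λ` lies in `Δ`) and (b) surjectivity (every `c` is congruent mod `C^λ` to an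
element of `C_λ`). -/
theorem statement8
    {K C R : Type*} [AddCommMonoid K] [AddCommGroup C]
    [CommRing R] [IsDomain R] [UniqueFactorizationMonoid R]
    (π : K →+ C) (hπ : Function.Surjective π)
    (σ : R →+* R) (hσ : ∀ r, σ (σ r) = r)
    (χ : K → R) (hχ : ∀ k, χ k ≠ 0)
    (hD1 : ∀ k, Associated (σ (χ k)) (χ k))
    (hD2 : ∀ k k', Associated (χ (k + k')) (χ k * χ k'))
    (hD3 : ∀ k, ∃ j, π j = -π k ∧ Associated (χ j) (χ k))
    (hL : LeftPD σ (Set.univ : Set C) (DeltaSet π χ) (Cprim σ π χ))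
    (hR : RightPD σ (Set.univ : Set C) (DeltaSet π χ) (Cco π χ))
    (l : R) (hl : Irreducible l) :
    (∀ c ∈ Cprim σ π χ l ∩ Cco π χ l, c ∈ DeltaSet π χ) ∧
    (∀ c : C, ∃ d ∈ Cprim σ π χ l, c - d ∈ Cco π χ l) := by
  classical
have hprime : ∀ {p : R}, Irreducible p → Prime p :=
  fun hp => UniqueFactorizationMonoid.irreducible_iff_prime.mp hp
have sA : ∀ {a b : R}, Associated a b → Associated (σ a) (σ b) :=
  fun hab => sigma_assoc σ hσ hab
-- χ 0 is a unit
have h0 : IsUnit (χ 0) := by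
  obtain ⟨u, hu⟩ := hD2 0 0
  rw [add_zero] at hu
  have hcancel : (u : R) = χ 0 := mul_left_cancel₀ (hχ 0) hu
  exact hcancel ▸ u.isUnit
-- key divisibility claim
have claim1 : ∀ {p m : R}, Irreducible p → Irreducible m → ∀ {n : ℕ},
    p ∣ Sdual σ m ^ n → Associated p m ∨ Associated p (σ m) := by
  intro p m hp hm n hdvd
  have hpS : p ∣ Sdual σ m := (hprime hp).dvd_of_dvd_pow hdvd
  unfold Sdual at hpS
  by_cases hm' : Associated m (σ m)
  · rw [if_pos hm'] at hpS
    exact Or.inl (hp.associated_of_dvd hm hpS)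
  · rw [if_neg hm'] at hpS
    rcases (hprime hp).dvd_mul.mp hpS with h1 | h1
    · exact Or.inl (hp.associated_of_dvd hm h1)
    · exact Or.inr (hp.associated_of_dvd (sigma_irr σ hσ hm) h1)
-- Δ ⊆ C^l, closure properties
have hDco : ∀ {p : R}, Irreducible p → ∀ c ∈ DeltaSet π χ, c ∈ Cco π χ p := by
  intro p hp c hc
  obtain ⟨k, hk, hu⟩ := hc
  exact ⟨k, hk, fun hd => hp.not_isUnit (isUnit_of_dvd_unit hd hu)⟩
have hCcoAdd : ∀ {c c' : C}, c ∈ Cco π χ l → c' ∈ Cco π χ l → c + c' ∈ Cco π χ l := by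
  rintro c c' ⟨k, hk, hkd⟩ ⟨k', hk', hkd'⟩
  refine ⟨k + k', by rw [map_add, hk, hk'], fun hd => ?_⟩
  have hd2 : l ∣ χ k * χ k' := hd.trans (hD2 k k').dvd
  rcases (hprime hl).dvd_mul.mp hd2 with h1 | h1
  · exact hkd h1
  · exact hkd' h1
have hCprimAdd : ∀ {c c' : C}, c ∈ Cprim σ π χ l → c' ∈ Cprim σ π χ l →
    c + c' ∈ Cprim σ π χ l := by
  rintro c c' ⟨k, hk, n, hkn⟩ ⟨k', hk', n', hkn'⟩
  exact ⟨k + k', by rw [map_add, hk, hk'], n + n',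
    (hD2 k k').trans (by rw [pow_add]; exact hkn.mul_mul hkn')⟩
have hCprimZero : (0 : C) ∈ Cprim σ π χ l :=
  ⟨0, map_zero π, 0, by rw [pow_zero]; exact associated_one_iff_isUnit.mpr h0⟩
have hCcoZero : (0 : C) ∈ Cco π χ l :=
  hDco hl 0 ⟨0, map_zero π, h0⟩
constructor
· -- part (a)
  rintro c ⟨⟨k, hk, n, hkn⟩, ⟨k', hk', hk'l⟩⟩
  refine hR.1 c (Set.mem_univ c) ?_
  intro μ hμ
  by_cases h1 : Associated μ l
  · exact ⟨k', hk', fun hd => hk'l (h1.symm.dvd.trans hd)⟩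
  · by_cases h2 : Associated μ (σ l)
    · refine ⟨k', hk', fun hd => hk'l ?_⟩
      have hsl : σ l ∣ χ k' := h2.symm.dvd.trans hd
      have : σ (σ l) ∣ σ (χ k') := map_dvd σ hsl
      rw [hσ l] at this
      exact this.trans (hD1 k').dvd
    · refine ⟨k, hk, fun hd => ?_⟩
      have hdS : μ ∣ Sdual σ l ^ n := hd.trans hkn.dvd
      rcases claim1 hμ hl hdS with h | h
      · exact h1 h
      · exact h2 h
· -- part (b)
  intro c
  obtain ⟨d0, hd0, n, lam, cs, hirr, hcs, hsum⟩ := hL.1 c (Set.mem_univ c)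
  set p : Fin n → Prop := fun i => StarAssoc σ (lam i) l with hp
  refine ⟨∑ i ∈ Finset.univ.filter p, cs i, ?_, ?_⟩
  · refine Finset.sum_induction cs (· ∈ Cprim σ π χ l)
      (fun a b ha hb => hCprimAdd ha hb) hCprimZero ?_
    intro i hi
    have hpi : p i := (Finset.mem_filter.mp hi).2
    obtain ⟨k, hk, m, hkm⟩ := hcs i
    exact ⟨k, hk, m, hkm.trans ((sdual_assoc σ hσ hpi).pow_pow)⟩
  · have hsplit : ∑ i ∈ Finset.univ.filter p, cs i
        + ∑ i ∈ Finset.univ.filter (fun i => ¬ p i), cs i = ∑ i, cs i :=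
      Finset.sum_filter_add_sum_filter_not _ _ _
    have heq : c - ∑ i ∈ Finset.univ.filter p, cs i
        = d0 + ∑ i ∈ Finset.univ.filter (fun i => ¬ p i), cs i := by
      rw [hsum, ← hsplit]; abel
    rw [heq]
    refine hCcoAdd (hDco hl d0 hd0) ?_
    refine Finset.sum_induction cs (· ∈ Cco π χ l)
      (fun a b ha hb => hCcoAdd ha hb) hCcoZero ?_
    intro i hi
    have hpi : ¬ p i := (Finset.mem_filter.mp hi).2
    obtain ⟨k, hk, m, hkm⟩ := hcs i
    refine ⟨k, hk, fun hd => hpi ?_⟩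
    have hdS : l ∣ Sdual σ (lam i) ^ m := hd.trans hkm.dvd
    rcases claim1 hl (hirr i) hdS with h | h
    · exact Or.inl h.symm
    · refine Or.inr ?_
      have := sA h
      rw [hσ (lam i)] at this
      exact this.symm
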